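/- For every integer k ≥ 2 and each z ∈ {x, y}: every proper 3-coloring σ of the graph F_k with σ(u) = 1, σ(v) = 2 and σ(z) = 1 equals ψ. -/
import Mathlib


/-- Vertices of the gadget graph `F_k`: `u`, `v`, `x`, `y`, the vertices
`z_1, …, z_5` (`z j` models `z_{j+1}`), their primed copies `z'_1, …, z'_5`
(`z' j`), the vertices `y_1, …, y_k` (`Y i` models `y_{i+1}`), and the vertices
`x_{1,i}` (`p i`) and `x_{2,i}` (`q i`) for `1 ≤ i ≤ k−1`. -/
inductive FVert (k : ℕ) : Type
  | u : FVert k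
  | v : FVert k
  | x : FVert k
  | y : FVert k
  | z : Fin 5 → FVert k
  | z' : Fin 5 → FVert k
  | Y : Fin k → FVert k
  | p : Fin (k - 1) → FVert k
  | q : Fin (k - 1) → FVert k

/-- The edges of `F_k`: `z₁x`, `z'₁y`, `z₁v`, `z'₁v`, `uz₃`, `uz'₃`, `uz₅`, `uz'₅`;
the triangles `{z₁,z₂,z₃}`, `{z'₁,z'₂,z'₃}`, `{z₄,z₂,z₃}`, `{z'₄,z'₂,z'₃}`,
`{z₅,z₄,y}`, `{z'₅,z'₄,x}`; for each `1 ≤ i ≤ k−1` the triangles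
`{yᵢ, x_{1,i}, x_{2,i}}` and `{y_{i+1}, x_{1,i}, x_{2,i}}` together with the edge
`u x_{1,i}`; and the edges `x y_k`, `y y_k`, `v y_k`. -/
def FRel (k : ℕ) : FVert k → FVert k → Prop
  | .z j, .x => (j : ℕ) = 0
  | .z' j, .x => (j : ℕ) = 3 ∨ (j : ℕ) = 4
  | .z' j, .y => (j : ℕ) = 0
  | .z j, .y => (j : ℕ) = 3 ∨ (j : ℕ) = 4
  | .z j, .v => (j : ℕ) = 0
  | .z' j, .v => (j : ℕ) = 0
  | .u, .z j => (j : ℕ) = 2 ∨ (j : ℕ) = 4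
  | .u, .z' j => (j : ℕ) = 2 ∨ (j : ℕ) = 4
  | .z i, .z j =>
      ((i : ℕ) = 0 ∧ (j : ℕ) = 1) ∨ ((i : ℕ) = 0 ∧ (j : ℕ) = 2) ∨
      ((i : ℕ) = 1 ∧ (j : ℕ) = 2) ∨ ((i : ℕ) = 3 ∧ (j : ℕ) = 1) ∨
      ((i : ℕ) = 3 ∧ (j : ℕ) = 2) ∨ ((i : ℕ) = 4 ∧ (j : ℕ) = 3)
  | .z' i, .z' j =>
      ((i : ℕ) = 0 ∧ (j : ℕ) = 1) ∨ ((i : ℕ) = 0 ∧ (j : ℕ) = 2) ∨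
      ((i : ℕ) = 1 ∧ (j : ℕ) = 2) ∨ ((i : ℕ) = 3 ∧ (j : ℕ) = 1) ∨
      ((i : ℕ) = 3 ∧ (j : ℕ) = 2) ∨ ((i : ℕ) = 4 ∧ (j : ℕ) = 3)
  | .Y i, .p j => (i : ℕ) = (j : ℕ) ∨ (i : ℕ) = (j : ℕ) + 1
  | .Y i, .q j => (i : ℕ) = (j : ℕ) ∨ (i : ℕ) = (j : ℕ) + 1
  | .p i, .q j => (i : ℕ) = (j : ℕ)
  | .u, .p _ => True
  | .x, .Y i => (i : ℕ) = k - 1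
  | .y, .Y i => (i : ℕ) = k - 1
  | .v, .Y i => (i : ℕ) = k - 1
  | _, _ => False

/-- The gadget graph `F_k`. -/
def Fgraph (k : ℕ) : SimpleGraph (FVert k) := SimpleGraph.fromRel (FRel k)

/-- The coloring `ψ` of `F_k`; colors `1, 2, 3` are modelled as `0, 1, 2 : Fin 3`:
`ψ(u) = 1`, `ψ(v) = 2`, `ψ(x) = ψ(y) = 1`, `ψ(z₁) = ψ(z'₁) = ψ(z₄) = ψ(z'₄) = 3`,
`ψ(z₅) = ψ(z'₅) = ψ(z₃) = ψ(z'₃) = 2`, `ψ(z₂) = ψ(z'₂) = 1`, and `ψ(yᵢ) = 3`,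
`ψ(x_{1,i}) = 2`, `ψ(x_{2,i}) = 1` for all `i`. -/
def ψF (k : ℕ) : FVert k → Fin 3
  | .u => 0
  | .v => 1
  | .x => 0
  | .y => 0
  | .z j => ![2, 0, 1, 2, 1] j
  | .z' j => ![2, 0, 1, 2, 1] j
  | .Y _ => 2
  | .p _ => 1
  | .q _ => 0


set_option maxHeartbeats 1000000

/-- For every `k ≥ 2` and each `w ∈ {x, y}`: every proper 3-coloring `σ` of `F_k` with
`σ(u) = 1`, `σ(v) = 2` and `σ(w) = 1` (colors `1, 2, 3` are modelled as
`0, 1, 2 : Fin 3`) is equal to `ψ`. -/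
theorem stmt13 (k : ℕ) (hk : 2 ≤ k) (w : FVert k) (hw : w = .x ∨ w = .y)
    (σ : FVert k → Fin 3) (hproper : ∀ p q, (Fgraph k).Adj p q → σ p ≠ σ q)
    (hu : σ .u = 0) (hv : σ .v = 1) (hz : σ w = 0) :
    σ = ψF k := by
  have key : ∀ a b : FVert k, a ≠ b → (FRel k a b ∨ FRel k b a) → σ a ≠ σ b := by
    intro a b h hr
    exact hproper a b (by rw [Fgraph, SimpleGraph.fromRel_adj]; exact ⟨h, hr⟩)
  -- the unprimed z-chain: from σ x = 0 deduce the colors of z₀,…,z₄ and σ y = 0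
  have chainZ : σ .x = 0 → σ (.z 0) = 2 ∧ σ (.z 1) = 0 ∧ σ (.z 2) = 1 ∧
      σ (.z 3) = 2 ∧ σ (.z 4) = 1 ∧ σ .y = 0 := by
    intro hx
    have h0x := key (.z 0) .x nofun (Or.inl rfl)
    have h0v := key (.z 0) .v nofun (Or.inl rfl)
    have h2u := key .u (.z 2) nofun (Or.inl (Or.inl rfl))
    have h20 := key (.z 0) (.z 2) (by simp) (Or.inl (Or.inr (Or.inl ⟨rfl, rfl⟩)))
    have h10 := key (.z 0) (.z 1) (by simp) (Or.inl (Or.inl ⟨rfl, rfl⟩))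
    have h12 := key (.z 1) (.z 2) (by simp) (Or.inl (Or.inr (Or.inr (Or.inl ⟨rfl, rfl⟩))))
    have h31 := key (.z 3) (.z 1) (by simp)
      (Or.inl (Or.inr (Or.inr (Or.inr (Or.inl ⟨rfl, rfl⟩)))))
    have h32 := key (.z 3) (.z 2) (by simp)
      (Or.inl (Or.inr (Or.inr (Or.inr (Or.inr (Or.inl ⟨rfl, rfl⟩))))))
    have h4u := key .u (.z 4) nofun (Or.inl (Or.inr rfl))
    have h43 := key (.z 4) (.z 3) (by simp)
      (Or.inl (Or.inr (Or.inr (Or.inr (Or.inr (Or.inr ⟨rfl, rfl⟩))))))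
    have h3y := key (.z 3) .y nofun (Or.inl (Or.inl rfl))
    have h4y := key (.z 4) .y nofun (Or.inl (Or.inr rfl))
    omega
  -- the primed z-chain: from σ y = 0 deduce the colors of z'₀,…,z'₄ and σ x = 0
  have chainZ' : σ .y = 0 → σ (.z' 0) = 2 ∧ σ (.z' 1) = 0 ∧ σ (.z' 2) = 1 ∧
      σ (.z' 3) = 2 ∧ σ (.z' 4) = 1 ∧ σ .x = 0 := by
    intro hy
    have h0x := key (.z' 0) .y nofun (Or.inl rfl)
    have h0v := key (.z' 0) .v nofun (Or.inl rfl)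
    have h2u := key .u (.z' 2) nofun (Or.inl (Or.inl rfl))
    have h20 := key (.z' 0) (.z' 2) (by simp) (Or.inl (Or.inr (Or.inl ⟨rfl, rfl⟩)))
    have h10 := key (.z' 0) (.z' 1) (by simp) (Or.inl (Or.inl ⟨rfl, rfl⟩))
    have h12 := key (.z' 1) (.z' 2) (by simp) (Or.inl (Or.inr (Or.inr (Or.inl ⟨rfl, rfl⟩))))
    have h31 := key (.z' 3) (.z' 1) (by simp)
      (Or.inl (Or.inr (Or.inr (Or.inr (Or.inl ⟨rfl, rfl⟩)))))
    have h32 := key (.z' 3) (.z' 2) (by simp)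
      (Or.inl (Or.inr (Or.inr (Or.inr (Or.inr (Or.inl ⟨rfl, rfl⟩))))))
    have h4u := key .u (.z' 4) nofun (Or.inl (Or.inr rfl))
    have h43 := key (.z' 4) (.z' 3) (by simp)
      (Or.inl (Or.inr (Or.inr (Or.inr (Or.inr (Or.inr ⟨rfl, rfl⟩))))))
    have h3y := key (.z' 3) .x nofun (Or.inl (Or.inl rfl))
    have h4y := key (.z' 4) .x nofun (Or.inl (Or.inr rfl))
    omega
  -- from the hypothesis on w, both σ x = 0 and σ y = 0 hold
  have hxy : σ .x = 0 ∧ σ .y = 0 := by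
    rcases hw with rfl | rfl
    · exact ⟨hz, (chainZ hz).2.2.2.2.2⟩
    · exact ⟨(chainZ' hz).2.2.2.2.2, hz⟩
  obtain ⟨hx, hy⟩ := hxy
  obtain ⟨hz0, hz1, hz2, hz3, hz4, -⟩ := chainZ hx
  obtain ⟨hz0', hz1', hz2', hz3', hz4', -⟩ := chainZ' hy
  -- the Y chain, by downward induction from y_k
  have hYn : ∀ n (i : Fin k), (i : ℕ) = k - 1 - n → σ (.Y i) = 2 := by
    intro n
    induction n with
    | zero =>
      intro i hi
      have hik : (i : ℕ) = k - 1 := by omega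
      have rx : FRel k .x (.Y i) := hik
      have rv : FRel k .v (.Y i) := hik
      have hxY := key .x (.Y i) nofun (Or.inl rx)
      have hvY := key .v (.Y i) nofun (Or.inl rv)
      omega
    | succ m ih =>
      intro i hi
      by_cases hbig : k - 1 ≤ m
      · exact ih i (by omega)
      · obtain ⟨i', hi'⟩ : ∃ i' : Fin k, (i' : ℕ) = (i : ℕ) + 1 := ⟨⟨(i:ℕ)+1, by omega⟩, rfl⟩
        obtain ⟨j, hj⟩ : ∃ j : Fin (k-1), (j : ℕ) = (i : ℕ) := ⟨⟨(i:ℕ), by omega⟩, rfl⟩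
        have hYi' := ih i' (by omega)
        have r1 : FRel k .u (.p j) := trivial
        have r2 : FRel k (.Y i') (.p j) := Or.inr (by omega)
        have r3 : FRel k (.Y i') (.q j) := Or.inr (by omega)
        have r4 : FRel k (.p j) (.q j) := rfl
        have r5 : FRel k (.Y i) (.p j) := Or.inl (by omega)
        have r6 : FRel k (.Y i) (.q j) := Or.inl (by omega)
        have h1 := key .u (.p j) nofun (Or.inl r1)
        have h2 := key (.Y i') (.p j) nofun (Or.inl r2)
        have h3 := key (.Y i') (.q j) nofun (Or.inl r3)
        have h4 := key (.p j) (.q j) nofun (Or.inl r4)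
        have h5 := key (.Y i) (.p j) nofun (Or.inl r5)
        have h6 := key (.Y i) (.q j) nofun (Or.inl r6)
        omega
  have hY : ∀ i : Fin k, σ (.Y i) = 2 := fun i => hYn (k - 1 - (i : ℕ)) i (by omega)
  have hp : ∀ j : Fin (k-1), σ (.p j) = 1 := by
    intro j
    obtain ⟨i, hi⟩ : ∃ i : Fin k, (i : ℕ) = (j : ℕ) := ⟨⟨(j:ℕ), by omega⟩, rfl⟩
    have r1 : FRel k .u (.p j) := trivial
    have r5 : FRel k (.Y i) (.p j) := Or.inl (by omega)
    have h1 := key .u (.p j) nofun (Or.inl r1)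
    have h5 := key (.Y i) (.p j) nofun (Or.inl r5)
    have := hY i
    omega
  have hq : ∀ j : Fin (k-1), σ (.q j) = 0 := by
    intro j
    obtain ⟨i, hi⟩ : ∃ i : Fin k, (i : ℕ) = (j : ℕ) := ⟨⟨(j:ℕ), by omega⟩, rfl⟩
    have r4 : FRel k (.p j) (.q j) := rfl
    have r6 : FRel k (.Y i) (.q j) := Or.inl (by omega)
    have h4 := key (.p j) (.q j) nofun (Or.inl r4)
    have h6 := key (.Y i) (.q j) nofun (Or.inl r6)
    have := hY i
    have := hp j
    omega
  funext a
  cases a with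
  | u => exact hu
  | v => exact hv
  | x => exact hx
  | y => exact hy
  | z j =>
    fin_cases j
    · exact hz0
    · exact hz1
    · exact hz2
    · exact hz3
    · exact hz4
  | z' j =>
    fin_cases j
    · exact hz0'
    · exact hz1'
    · exact hz2'
    · exact hz3'
    · exact hz4'
  | Y i => exact hY i
  | p j => exact hp j
  | q j => exact hq j
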